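/- arXiv:1001.2860 — 6 statements merged into one kernel-verified Lean document; each statement's English description precedes it below -/
import Mathlib

section
/- Let Σ be a linearly ordered alphabet and let ≤_slex denote the suffix-lexicographic order on strings over Σ. If a string u is a suffix of both strings v₁ and v₂, and w is a string with v₁ ≤_slex w and w ≤_slex v₂, then u is a suffix of w. (The strings having a fixed suffix u form an interval in the suffix-lexicographic order.) -/
/-- The suffix-lexicographic (strict) order on strings over a linearly ordered
alphabet: `p <_slex q` iff the reversal of `p` is lexicographically smaller than the
reversal of `q` (where a proper prefix of a list precedes the list). -/
def SLex {α : Type*} [LinearOrder α] (p q : List α) : Prop :=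
  List.Lex (· < ·) p.reverse q.reverse

/-- The reflexive suffix-lexicographic order. -/
def SLexLe {α : Type*} [LinearOrder α] (p q : List α) : Prop :=
  SLex p q ∨ p = q

private theorem prefix_interval_in_lex {α : Type*} [LinearOrder α] :
    ∀ (p c a b : List α), p <+: a → p <+: b →
      (List.Lex (· < ·) a c ∨ a = c) → (List.Lex (· < ·) c b ∨ c = b) → p <+: c := by
  intro p
  induction p with
  | nil => intro c _ _ _ _ _ _; exact c.nil_prefix
  | cons x p ih =>
    intro c a b hpa hpb hac hcb
    rcases hac with hac | rfl
    · rcases hcb with hcb | rfl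
      · match a, hpa with
        | x :: a', hpa =>
          match b, hpb with
          | x' :: b', hpb =>
            obtain ⟨rfl, hpa'⟩ := List.cons_prefix_cons.mp hpa
            obtain ⟨rfl, hpb'⟩ := List.cons_prefix_cons.mp hpb
            cases hac with
            | cons h1 =>
              cases hcb with
              | cons h2 =>
                exact List.cons_prefix_cons.mpr ⟨rfl, ih _ _ _ hpa' hpb' (Or.inl h1) (Or.inl h2)⟩
              | rel h2 => exact absurd h2 (lt_irrefl _)
            | rel h1 =>
              cases hcb with
              | cons h2 => exact absurd h1 (lt_irrefl _)
              | rel h2 => exact absurd (h1.trans h2) (lt_irrefl _)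
      · exact hpb
    · exact hpa

/-- The strings having a fixed suffix `u` form an interval in the
suffix-lexicographic order: if `u` is a suffix of both `v₁` and `v₂` and
`v₁ ≤_slex w ≤_slex v₂`, then `u` is a suffix of `w`. -/
theorem suffix_interval_in_slex {α : Type*} [LinearOrder α]
    (u v₁ v₂ w : List α) (h₁ : u <:+ v₁) (h₂ : u <:+ v₂)
    (hw₁ : SLexLe v₁ w) (hw₂ : SLexLe w v₂) :
    u <:+ w := by
  rw [← List.reverse_prefix] at h₁ h₂ ⊢
  refine prefix_interval_in_lex u.reverse w.reverse v₁.reverse v₂.reverse h₁ h₂ ?_ ?_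
  · rcases hw₁ with h | rfl
    · exact Or.inl h
    · exact Or.inr rfl
  · rcases hw₂ with h | rfl
    · exact Or.inl h
    · exact Or.inr rfl
end

section
/- Let S be a finite set of strings over a linearly ordered alphabet Σ, let P be the set of all prefixes of strings of S including the empty string, and for p ∈ P let state(p) = |{q ∈ P : q <_slex p}| be its rank in P under the suffix-lexicographic order. For a nonempty p = p'++[c] ∈ P define pair(p) = (c, state(p')) (note p' ∈ P since P is prefix-closed). Then for all nonempty p, q ∈ P: p <_slex q if and only if pair(p) is lexicographically smaller than pair(q) (comparing first characters by the order of Σ, then second components as natural numbers); consequently the map pair is injective on the nonempty elements of P, and for every nonempty p ∈ P the number of nonempty q ∈ P with pair(q) lexicographically smaller than pair(p) equals state(p) − 1. -/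
noncomputable def stateRank {α : Type*} [LinearOrder α]
    (P : Finset (List α)) (p : List α) : ℕ :=
  {q : List α | q ∈ P ∧ SLex q p}.ncard

section aux
variable {α : Type*} [LinearOrder α]

lemma slex_trans {p q r : List α} (h1 : SLex p q) (h2 : SLex q r) : SLex p r :=
  List.lex_trans (fun h1 h2 => lt_trans h1 h2) h1 h2

lemma slex_irrefl (p : List α) : ¬ SLex p p := irrefl_of (List.Lex (· < ·)) _

lemma slex_trichot (p q : List α) : SLex p q ∨ p = q ∨ SLex q p := by
  haveI : IsTrichotomous α (· < ·) := ⟨fun a b h1 h2 => (lt_trichotomy a b).elim (absurd · h1) (·.elim id (absurd · h2))⟩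
  rcases trichotomous_of (List.Lex (· < ·)) p.reverse q.reverse with h | h | h
  · exact Or.inl h
  · exact Or.inr (Or.inl (List.reverse_injective h))
  · exact Or.inr (Or.inr h)

lemma slex_append {p q : List α} {c d : α} :
    SLex (p ++ [c]) (q ++ [d]) ↔ c < d ∨ (c = d ∧ SLex p q) := by
  unfold SLex
  simp only [List.reverse_append, List.reverse_singleton, List.singleton_append]
  constructor
  · intro h
    cases h with
    | rel h => exact Or.inl h
    | cons h => exact Or.inr ⟨rfl, h⟩
  · rintro (h | ⟨rfl, h⟩)
    · exact List.Lex.rel h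
    · exact List.Lex.cons h

lemma rank_lt_iff {P : Finset (List α)} {p q : List α} (hp : p ∈ P) (hq : q ∈ P) :
    stateRank P p < stateRank P q ↔ SLex p q := by
  have hfin : ∀ r : List α, ({x : List α | x ∈ P ∧ SLex x r}).Finite := fun r =>
    P.finite_toSet.subset (fun x hx => hx.1)
  constructor
  · intro h
    rcases slex_trichot p q with h' | rfl | h'
    · exact h'
    · exact absurd h (lt_irrefl _)
    · have : stateRank P q ≤ stateRank P p :=
        Set.ncard_le_ncard (fun x hx => ⟨hx.1, slex_trans hx.2 h'⟩) (hfin p)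
      omega
  · intro h
    apply Set.ncard_lt_ncard _ (hfin q)
    constructor
    · exact fun x hx => ⟨hx.1, slex_trans hx.2 h⟩
    · intro hsub
      exact slex_irrefl p (hsub ⟨hp, h⟩).2

end aux

/-- Let `P` be the set of all prefixes of strings of a finite set `S`
(including the empty string), and for nonempty `p = p' ++ [c] ∈ P` let
`pair p = (c, stateRank P p')`. Then the suffix-lexicographic order on nonempty
elements of `P` coincides with the lexicographic order on their pairs; consequently
`pair` is injective on nonempty elements of `P`, and for nonempty `p ∈ P` the number
of nonempty `q ∈ P` whose pair is lexicographically smaller than that of `p` equals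
`stateRank P p − 1`. -/
theorem transition_dictionary_pairs {α : Type*} [LinearOrder α]
    (S : Finset (List α)) (P : Finset (List α))
    (hP : ∀ p : List α, p ∈ P ↔ p = [] ∨ ∃ s ∈ S, p <+: s) :
    (∀ p' q' : List α, ∀ c d : α, p' ++ [c] ∈ P → q' ++ [d] ∈ P →
        (SLex (p' ++ [c]) (q' ++ [d]) ↔
          c < d ∨ (c = d ∧ stateRank P p' < stateRank P q'))) ∧
      (∀ p' q' : List α, ∀ c d : α, p' ++ [c] ∈ P → q' ++ [d] ∈ P →
        (c, stateRank P p') = (d, stateRank P q') → p' ++ [c] = q' ++ [d]) ∧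
      (∀ p' : List α, ∀ c : α, p' ++ [c] ∈ P →
        {q : List α | q ∈ P ∧ ∃ q' : List α, ∃ d : α, q = q' ++ [d] ∧
            (d < c ∨ (d = c ∧ stateRank P q' < stateRank P p'))}.ncard =
          stateRank P (p' ++ [c]) - 1) := by
  -- prefix-closedness
  have hpref : ∀ p' : List α, ∀ c : α, p' ++ [c] ∈ P → p' ∈ P := by
    intro p' c h
    rcases (hP _).1 h with h0 | ⟨s, hs, hps⟩
    · simp at h0
    · exact (hP _).2 (Or.inr ⟨s, hs, (List.prefix_append p' [c]).trans hps⟩)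
  have key : ∀ p' q' : List α, ∀ c d : α, p' ++ [c] ∈ P → q' ++ [d] ∈ P →
      (SLex (p' ++ [c]) (q' ++ [d]) ↔
        c < d ∨ (c = d ∧ stateRank P p' < stateRank P q')) := by
    intro p' q' c d hp hq
    rw [slex_append, rank_lt_iff (hpref _ _ hp) (hpref _ _ hq)]
  refine ⟨key, ?_, ?_⟩
  · intro p' q' c d hp hq hpair
    obtain ⟨rfl, hrank⟩ : c = d ∧ stateRank P p' = stateRank P q' :=
      ⟨congrArg Prod.fst hpair, congrArg Prod.snd hpair⟩
    rcases slex_trichot p' q' with h | rfl | h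
    · rw [← rank_lt_iff (hpref _ _ hp) (hpref _ _ hq)] at h; omega
    · rfl
    · rw [← rank_lt_iff (hpref _ _ hq) (hpref _ _ hp)] at h; omega
  · intro p' c hp
    have hnil : ([] : List α) ∈ P := (hP _).2 (Or.inl rfl)
    have hA : {q : List α | q ∈ P ∧ ∃ q' : List α, ∃ d : α, q = q' ++ [d] ∧
        (d < c ∨ (d = c ∧ stateRank P q' < stateRank P p'))}
        = {q : List α | q ∈ P ∧ SLex q (p' ++ [c])} \ {[]} := by
      ext q
      simp only [Set.mem_setOf_eq, Set.mem_diff, Set.mem_singleton_iff]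
      constructor
      · rintro ⟨hq, q', d, rfl, hlt⟩
        exact ⟨⟨hq, (key q' p' d c hq hp).2 hlt⟩, by simp⟩
      · rintro ⟨⟨hq, hlt⟩, hne⟩
        refine ⟨hq, q.dropLast, q.getLast hne, (q.dropLast_append_getLast hne).symm, ?_⟩
        rw [← q.dropLast_append_getLast hne] at hq hlt
        exact (key _ p' _ c hq hp).1 hlt
    rw [hA]
    have hfin : ({q : List α | q ∈ P ∧ SLex q (p' ++ [c])}).Finite :=
      P.finite_toSet.subset (fun x hx => hx.1)
    have hmem : ([] : List α) ∈ {q : List α | q ∈ P ∧ SLex q (p' ++ [c])} := by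
      refine ⟨hnil, ?_⟩
      unfold SLex
      simp [List.reverse_append]
    rw [Set.ncard_diff_singleton_of_mem hmem]
    rfl
end

section
/- Let P be a finite set of strings over an alphabet Σ that contains the empty string and is closed under taking prefixes. For a string w let φ(w) denote the longest suffix of w belonging to P. Then for every string w and every character c ∈ Σ: φ(w++[c]) = φ(φ(w)++[c]). -/
/-- Let `P` be a finite, prefix-closed set of strings containing the
empty string, and let `φ w` be the longest suffix of `w` belonging to `P`. Then
`φ (w ++ [c]) = φ (φ w ++ [c])` for every string `w` and character `c`. -/
theorem aho_corasick_state_recursion {α : Type*}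
    (P : Finset (List α)) (hnil : ([] : List α) ∈ P)
    (hclosed : ∀ p ∈ P, ∀ q : List α, q <+: p → q ∈ P)
    (φ : List α → List α)
    (hφ : ∀ w : List α, φ w ∈ P ∧ φ w <:+ w ∧ ∀ r ∈ P, r <:+ w → r <:+ φ w) :
    ∀ (w : List α) (c : α), φ (w ++ [c]) = φ (φ w ++ [c]) := by
  intro w c
  obtain ⟨hA_mem, hA_suf, hA_max⟩ := hφ (w ++ [c])
  obtain ⟨hw_mem, hw_suf, hw_max⟩ := hφ w
  obtain ⟨hB_mem, hB_suf, hB_max⟩ := hφ (φ w ++ [c])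
  -- B := φ (φ w ++ [c]) is a suffix of w ++ [c], hence of A := φ (w ++ [c])
  have hBA : φ (φ w ++ [c]) <:+ φ (w ++ [c]) := by
    apply hA_max _ hB_mem
    exact hB_suf.trans (by obtain ⟨t, ht⟩ := hw_suf; exact ⟨t, by rw [← List.append_assoc, ht]⟩)
  -- A is a suffix of φ w ++ [c], hence a suffix of B
  have hAB : φ (w ++ [c]) <:+ φ (φ w ++ [c]) := by
    apply hB_max _ hA_mem
    rcases (φ (w ++ [c])).eq_nil_or_concat with h | ⟨A', a, h⟩
    · rw [h]; exact List.nil_suffix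
    · obtain ⟨t, ht⟩ := hA_suf
      rw [h, List.concat_eq_append, ← List.append_assoc] at ht
      have h2 := List.append_inj' ht rfl
      obtain ⟨h3, h4⟩ := h2
      have hac : a = c := by simpa using h4
      have hA'w : A' <:+ w := ⟨t, h3⟩
      have hA'P : A' ∈ P := by
        apply hclosed _ hA_mem
        rw [h, List.concat_eq_append]; exact ⟨[a], rfl⟩
      have hA'φ : A' <:+ φ w := hw_max _ hA'P hA'w
      obtain ⟨s, hs⟩ := hA'φ
      rw [h, List.concat_eq_append, hac]
      exact ⟨s, by rw [← List.append_assoc, hs]⟩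
  exact (hBA.sublist.antisymm hAB.sublist).symm
end

section
/- Let P be a finite set of strings over an alphabet Σ that contains the empty string and is closed under taking prefixes, and for a string w let φ(w) denote the longest suffix of w belonging to P; for nonempty p ∈ P let fail(p) denote the longest proper suffix of p belonging to P. Then for every p ∈ P and character c ∈ Σ: (i) if p++[c] ∈ P then φ(p++[c]) = p++[c]; (ii) if p++[c] ∉ P and p is nonempty then φ(p++[c]) = φ(fail(p)++[c]); (iii) if [c] ∉ P then φ([c]) is the empty string. -/
/-- Let `P` be a finite, prefix-closed set of strings containing the
empty string, `φ w` the longest suffix of `w` belonging to `P`, and `fail p` the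
longest proper suffix of a nonempty `p ∈ P` belonging to `P`. Then for `p ∈ P` and a
character `c`:
(i) if `p ++ [c] ∈ P` then `φ (p ++ [c]) = p ++ [c]`;
(ii) if `p ++ [c] ∉ P` and `p ≠ []` then `φ (p ++ [c]) = φ (fail p ++ [c])`;
(iii) if `[c] ∉ P` then `φ [c] = []`. -/
theorem aho_corasick_goto_failure_recursion {α : Type*}
    (P : Finset (List α)) (hnil : ([] : List α) ∈ P)
    (hclosed : ∀ p ∈ P, ∀ q : List α, q <+: p → q ∈ P)
    (φ : List α → List α)
    (hφ : ∀ w : List α, φ w ∈ P ∧ φ w <:+ w ∧ ∀ r ∈ P, r <:+ w → r <:+ φ w)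
    (fail : List α → List α)
    (hfail : ∀ p ∈ P, p ≠ [] →
      fail p ∈ P ∧ fail p <:+ p ∧ fail p ≠ p ∧
        ∀ r ∈ P, r <:+ p → r ≠ p → r <:+ fail p) :
    (∀ p ∈ P, ∀ c : α, p ++ [c] ∈ P → φ (p ++ [c]) = p ++ [c]) ∧
      (∀ p ∈ P, ∀ c : α, p ++ [c] ∉ P → p ≠ [] →
        φ (p ++ [c]) = φ (fail p ++ [c])) ∧
      (∀ c : α, [c] ∉ P → φ [c] = []) := by
  refine ⟨?_, ?_, ?_⟩
  · intro p hp c hpc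
    obtain ⟨h1, h2, h3⟩ := hφ (p ++ [c])
    exact ((h3 _ hpc (List.suffix_refl _)).sublist.antisymm h2.sublist).symm
  · intro p hp c hpc hne
    obtain ⟨hf1, hf2, hf3, hf4⟩ := hfail p hp hne
    obtain ⟨h1, h2, h3⟩ := hφ (p ++ [c])
    obtain ⟨g1, g2, g3⟩ := hφ (fail p ++ [c])
    -- fail p ++ [c] <:+ p ++ [c]
    obtain ⟨s, hs⟩ := hf2
    have hsuf : fail p ++ [c] <:+ p ++ [c] := ⟨s, by rw [← List.append_assoc, hs]⟩
    -- key: φ (p ++ [c]) <:+ fail p ++ [c]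
    have hkey : φ (p ++ [c]) <:+ fail p ++ [c] := by
      rcases (φ (p ++ [c])).eq_nil_or_concat with he | ⟨r', d, he⟩
      · rw [he]; exact List.nil_suffix
      · simp only [List.concat_eq_append] at he
        obtain ⟨t, ht⟩ := h2
        rw [he] at ht
        have ht' : (t ++ r') ++ [d] = p ++ [c] := by
          rw [List.append_assoc]; exact ht
        obtain ⟨h5, h6⟩ := List.append_inj' ht' rfl
        have hdc : d = c := by simpa using h6
        have hr'p : r' <:+ p := ⟨t, h5⟩
        have hr'P : r' ∈ P := by
          refine hclosed _ h1 r' ?_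
          rw [he]; exact ⟨[d], rfl⟩
        have hr'ne : r' ≠ p := by
          rintro rfl
          apply hpc
          rw [← hdc, ← he]; exact h1
        have := hf4 r' hr'P hr'p hr'ne
        obtain ⟨u, hu⟩ := this
        rw [he, hdc]
        exact ⟨u, by rw [← List.append_assoc, hu]⟩
    have d1 : φ (p ++ [c]) <:+ φ (fail p ++ [c]) := g3 _ h1 hkey
    have d2 : φ (fail p ++ [c]) <:+ φ (p ++ [c]) := h3 _ g1 (g2.trans hsuf)
    exact (d2.sublist.antisymm d1.sublist).symm
  · intro c hc
    obtain ⟨h1, h2, h3⟩ := hφ [c]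
    rcases List.suffix_cons_iff.mp h2 with he | he
    · exact absurd (he ▸ h1) hc
    · simpa using he
end

section
/- Let S be a finite set of nonempty strings over an alphabet Σ. Define the report relation R on strings by: R x y iff y ∈ S, y is a proper suffix of x, and every element of S that is a proper suffix of x is a suffix of y (i.e., y is the longest proper suffix of x belonging to S). Then for every string p and every string y: (y ∈ S and y is a proper suffix of p) if and only if the transitive closure of R relates p to y. (Following report transitions from p enumerates exactly the elements of S that are proper suffixes of p.) -/
/-- Let `S` be a finite set of nonempty strings and define the report
relation `R x y` iff `y` is the longest proper suffix of `x` belonging to `S`. Then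
for any strings `p` and `y`: `y ∈ S` and `y` is a proper suffix of `p` iff the
transitive closure of `R` relates `p` to `y`. -/
theorem report_transitions_correct {α : Type*}
    (S : Finset (List α)) (hS : ∀ s ∈ S, s ≠ ([] : List α)) :
    ∀ p y : List α,
      (y ∈ S ∧ y <:+ p ∧ y ≠ p) ↔
        Relation.TransGen
          (fun x z : List α => z ∈ S ∧ z <:+ x ∧ z ≠ x ∧
            ∀ u ∈ S, u <:+ x → u ≠ x → u <:+ z) p y := by
  classical
  set R := fun x z : List α => z ∈ S ∧ z <:+ x ∧ z ≠ x ∧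
      ∀ u ∈ S, u <:+ x → u ≠ x → u <:+ z with hR
  have fwd : ∀ n p y, p.length ≤ n → y ∈ S → y <:+ p → y ≠ p →
      Relation.TransGen R p y := by
    intro n
    induction n with
    | zero =>
      intro p y hp hy hs hne
      have hpnil : p = [] := List.eq_nil_of_length_eq_zero (Nat.le_antisymm hp (Nat.zero_le _))
      subst hpnil
      exact absurd (List.suffix_nil.mp hs) hne
    | succ n ih =>
      intro p y hp hy hs hne
      obtain ⟨z, hzS, hzs, hzne, hzmax⟩ :
          ∃ z, z ∈ S ∧ z <:+ p ∧ z ≠ p ∧ ∀ u ∈ S, u <:+ p → u ≠ p → u <:+ z := by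
        set T := S.filter (fun u => u <:+ p ∧ u ≠ p) with hT
        have hyT : y ∈ T := by simp [hT, hy, hs, hne]
        obtain ⟨z, hzT, hzmax⟩ := T.exists_max_image (fun u => u.length) ⟨y, hyT⟩
        simp only [hT, Finset.mem_filter] at hzT
        refine ⟨z, hzT.1, hzT.2.1, hzT.2.2, ?_⟩
        intro u huS hus hune
        have huT : u ∈ T := by simp [hT, huS, hus, hune]
        have hlen : u.length ≤ z.length := hzmax u huT
        rcases List.suffix_or_suffix_of_suffix hus hzT.2.1 with h | h
        · exact h
        · have : z = u := h.eq_of_length (Nat.le_antisymm h.length_le hlen)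
          exact this ▸ List.suffix_refl z
      have hRpz : R p z := ⟨hzS, hzs, hzne, hzmax⟩
      by_cases hyz : y = z
      · exact Relation.TransGen.single (hyz ▸ hRpz)
      · have hyzs : y <:+ z := hzmax y hy hs hne
        have hzlen : z.length ≤ n := by
          have h1 : z.length < p.length :=
            Nat.lt_of_le_of_ne hzs.length_le (fun h => hzne (hzs.eq_of_length h))
          omega
        exact Relation.TransGen.head hRpz (ih z y hzlen hy hyzs hyz)
  intro p y
  constructor
  · rintro ⟨hy, hs, hne⟩
    exact fwd p.length p y le_rfl hy hs hne
  · intro h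
    induction h with
    | single h => exact ⟨h.1, h.2.1, h.2.2.1⟩
    | tail _ h₃ ih =>
      refine ⟨h₃.1, h₃.2.1.trans ih.2.1, ?_⟩
      intro he
      have h1 : _ ≤ _ := h₃.2.1.length_le
      have h2 : _ ≤ _ := ih.2.1.length_le
      have h3 : _ < _ := Nat.lt_of_le_of_ne h1 (fun h => h₃.2.2.1 (h₃.2.1.eq_of_length h))
      subst he
      omega
end

section
/- Let Σ be an alphabet, S a finite set of nonempty strings over Σ, and P the set of all prefixes of strings of S including the empty string (so P contains the empty string and is closed under taking prefixes). For a string w let φ(w) denote the longest suffix of w belonging to P, and let R be the relation defined by: R x y iff y ∈ S, y is a proper suffix of x, and every element of S that is a proper suffix of x is a suffix of y. Then for every text T (a string over Σ), every i ≤ |T|, and every string x, writing w for the prefix of T of length i: x ∈ S and x is a suffix of w, if and only if, (x = φ(w) and x ∈ S) or the transitive closure of R relates φ(w) to x. (The Aho-Corasick query on T reports exactly the occurrences of strings of S ending at each position of T.) -/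
private lemma aux_transgen {α : Type*} (S : Finset (List α))
    (x : List α) (hx : x ∈ S) :
    ∀ (n : ℕ) (u : List α), u.length ≤ n → x <:+ u → x ≠ u →
      Relation.TransGen
        (fun u v : List α => v ∈ S ∧ v <:+ u ∧ v ≠ u ∧
          ∀ z ∈ S, z <:+ u → z ≠ u → z <:+ v) u x := by
  intro n
  induction n with
  | zero =>
    intro u hu hsuf hne
    have : u = [] := List.length_eq_zero_iff.mp (Nat.le_zero.mp hu)
    subst this
    exact absurd (List.eq_nil_of_suffix_nil hsuf) hne
  | succ n ih =>
    intro u hu hsuf hne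
    classical
    -- the set of proper suffixes of u in S
    have hne' : (S.filter (fun v => v <:+ u ∧ v ≠ u)).Nonempty :=
      ⟨x, by simp [Finset.mem_filter, hx, hsuf, hne]⟩
    obtain ⟨v, hv, hvmax⟩ := Finset.exists_max_image _ (fun v => v.length) hne'
    simp only [Finset.mem_filter] at hv
    obtain ⟨hvS, hvsuf, hvne⟩ := hv
    have hstep : ∀ z ∈ S, z <:+ u → z ≠ u → z <:+ v := by
      intro z hzS hzsuf hzne
      have hlen : z.length ≤ v.length :=
        hvmax z (by simp [Finset.mem_filter, hzS, hzsuf, hzne])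
      rcases List.suffix_or_suffix_of_suffix hzsuf hvsuf with h | h
      · exact h
      · exact (h.sublist.eq_of_length_le hlen) ▸ List.suffix_rfl
    have hR : v ∈ S ∧ v <:+ u ∧ v ≠ u ∧ ∀ z ∈ S, z <:+ u → z ≠ u → z <:+ v :=
      ⟨hvS, hvsuf, hvne, hstep⟩
    by_cases hvx : v = x
    · exact Relation.TransGen.single (hvx ▸ hR)
    · have hxv : x <:+ v := hstep x hx hsuf hne
      have hvlt : v.length < u.length :=
        lt_of_le_of_ne hvsuf.length_le (fun h => hvne (hvsuf.sublist.eq_of_length_le h.ge))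
      exact Relation.TransGen.head hR
        (ih v (by omega) hxv (fun h => hvx h.symm))

/-- Let `S` be a finite set of nonempty strings, `P` the set of all
prefixes of strings of `S` (including the empty string), `φ w` the longest suffix of
`w` belonging to `P`, and `R` the report relation (`R x y` iff `y` is the longest
proper suffix of `x` belonging to `S`). Then for every text `T`, every `i ≤ |T|` and
every string `x`, with `w` the prefix of `T` of length `i`: `x ∈ S` and `x` is a
suffix of `w`, iff `x = φ w ∧ x ∈ S`, or the transitive closure of `R` relates
`φ w` to `x`. (The Aho–Corasick query reports exactly the occurrences of strings of
`S` ending at each position of `T`.) -/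
theorem aho_corasick_query_correct {α : Type*}
    (S : Finset (List α)) (hS : ∀ s ∈ S, s ≠ ([] : List α))
    (P : Finset (List α))
    (hP : ∀ p : List α, p ∈ P ↔ p = [] ∨ ∃ s ∈ S, p <+: s)
    (φ : List α → List α)
    (hφ : ∀ w : List α, φ w ∈ P ∧ φ w <:+ w ∧ ∀ r ∈ P, r <:+ w → r <:+ φ w) :
    ∀ (T : List α) (i : ℕ), i ≤ T.length → ∀ x : List α,
      (x ∈ S ∧ x <:+ T.take i) ↔
        ((x = φ (T.take i) ∧ x ∈ S) ∨
          Relation.TransGen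
            (fun u v : List α => v ∈ S ∧ v <:+ u ∧ v ≠ u ∧
              ∀ z ∈ S, z <:+ u → z ≠ u → z <:+ v)
            (φ (T.take i)) x) := by
  intro T i _ x
  set w := T.take i with hw
  obtain ⟨hφP, hφsuf, hφmax⟩ := hφ w
  constructor
  · rintro ⟨hxS, hxsuf⟩
    have hxP : x ∈ P := (hP x).mpr (Or.inr ⟨x, hxS, List.prefix_rfl⟩)
    have hxφ : x <:+ φ w := hφmax x hxP hxsuf
    by_cases h : x = φ w
    · exact Or.inl ⟨h, hxS⟩
    · exact Or.inr (aux_transgen S x hxS (φ w).length (φ w) le_rfl hxφ h)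
  · rintro (⟨rfl, hxS⟩ | htg)
    · exact ⟨hxS, hφsuf⟩
    · have key : x ∈ S ∧ x <:+ φ w := by
        induction htg with
        | single h => exact ⟨h.1, h.2.1⟩
        | tail _ h ih => exact ⟨h.1, h.2.1.trans ih.2⟩
      exact ⟨key.1, key.2.trans hφsuf⟩
end
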